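/- Let A_θ be the algebraic quantum torus with q = e^{2πiθ}, R = ℂ[U,U⁻¹], and δ the right character δ(U^nV^m) = q^{nm}U^n. Then the action U^k ◁ U^nV^m := δ(U^k · U^nV^m) = q^{(k+n)m}U^{k+n} makes R a right A_θ-module, and together with the coaction U^n ↦ U^n ⊗ 1 this gives R the structure of a stable anti-Yetter–Drinfeld module over A_θ with group-like element σ = 1; in particular stability holds: for every r ∈ R, r₍₀₎·r₍₋₁₎ = r. -/

import Mathlib

open TensorProduct

private lemma smul_flip' {M : Type*} [AddCommMonoid M] [Module ℂ M] {c : ℂ} (hc : c ≠ 0)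
    {a b : M} (h : a = c • b) : b = c⁻¹ • a := by
  rw [h, smul_smul, inv_mul_cancel₀ hc, one_smul]

private lemma qswap {A : Type*} [Ring A] [Algebra ℂ A] {c : ℂ} (hc : c ≠ 0) {X Y : Aˣ}
    (h : (X : A) * Y = c • ((Y : A) * X)) :
    (X : A) * ↑Y⁻¹ = c⁻¹ • ((↑Y⁻¹ : A) * X) := by
  have key : (↑Y⁻¹ : A) * (↑X * ↑Y) * ↑Y⁻¹ = (↑Y⁻¹ : A) * ↑X := by
    rw [mul_assoc, mul_assoc, Y.mul_inv, mul_one]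
  have h3 : (↑Y⁻¹ : A) * ↑X = c • ((↑X : A) * ↑Y⁻¹) := by
    rw [← key, h, mul_smul_comm, smul_mul_assoc, ← mul_assoc, Y.inv_mul, one_mul]
  exact smul_flip' hc h3

private lemma qcomm {A : Type*} [Ring A] [Algebra ℂ A] {c : ℂ} (hc : c ≠ 0) {X Y : Aˣ}
    (h : (X : A) * Y = c • ((Y : A) * X)) :
    ∀ n : ℤ, (↑(X ^ n) : A) * ↑Y = c ^ n • ((↑Y : A) * ↑(X ^ n)) := by
  have hYX : (Y : A) * X = c⁻¹ • ((X : A) * Y) := smul_flip' hc h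
  have hXi : (↑X⁻¹ : A) * ↑Y = c⁻¹ • ((↑Y : A) * ↑X⁻¹) := by
    have h4 := qswap (inv_ne_zero hc) hYX
    rw [inv_inv] at h4
    exact smul_flip' hc h4
  intro n
  induction n using Int.induction_on with
  | zero => simp
  | succ n ih =>
    have hX : X ^ ((n : ℤ) + 1) = X ^ (n : ℤ) * X := by rw [zpow_add_one]
    rw [hX, Units.val_mul, mul_assoc, h, mul_smul_comm, ← mul_assoc, ih,
      smul_mul_assoc, smul_smul, mul_assoc, ← Units.val_mul, ← hX,
      zpow_add_one₀ hc, mul_comm]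
  | pred n ih =>
    have hX : X ^ (-(n : ℤ) - 1) = X ^ (-(n : ℤ)) * X⁻¹ := by rw [zpow_sub_one]
    rw [hX, Units.val_mul, mul_assoc, hXi, mul_smul_comm, ← mul_assoc, ih,
      smul_mul_assoc, smul_smul, mul_assoc, ← Units.val_mul, ← hX,
      zpow_sub_one₀ hc, mul_comm]


/-- For the quantum torus `A_θ` with right character `δ(U^nV^m) = q^{nm}U^n`,
the action `U^k ◁ U^nV^m := δ(U^k·U^nV^m) = q^{(k+n)m}U^{k+n}` makes `R = ℂ[U,U⁻¹]` a right
`A_θ`-module, and together with the coaction `r ↦ s(r) ⊗ 1` (group-like `σ = 1`) this is a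
stable anti-Yetter–Drinfeld module; in particular stability holds: `r₍₀₎ · r₍₋₁₎ = r`,
i.e. `1 ◁ s(r) = r`. -/
theorem quantum_torus_SAYD_stability
    (A R : Type*) [Ring A] [Algebra ℂ A] [CommRing R] [Algebra ℂ R]
    (q : ℂ) (θ : ℝ) (hq : q = Complex.exp (2 * Real.pi * θ * Complex.I))
    (U V : Aˣ) (hUV : (U : A) * V = q • ((V : A) * U))
    (emb : R →ₐ[ℂ] A) (u : Rˣ) (hu : emb u = U)
    (hspanA : Submodule.span ℂ {x : A | ∃ n m : ℤ, x = ↑(U ^ n) * ↑(V ^ m)} = ⊤)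
    (hspanR : Submodule.span ℂ {r : R | ∃ n : ℤ, r = ↑(u ^ n)} = ⊤)
    (act : A →ₗ[ℂ] R →ₗ[ℂ] R)
    (hact : ∀ n m k : ℤ,
      act (↑(U ^ n) * ↑(V ^ m)) (↑(u ^ k)) = q ^ ((k + n) * m) • (↑(u ^ (k + n)) : R)) :
    -- `R` is a right `A_θ`-module under `◁`
    (∀ (x y : A) (r : R), act (x * y) r = act y (act x r)) ∧
    (∀ r : R, act 1 r = r) ∧
    -- stability of the anti-Yetter–Drinfeld module `R` (coaction `r ↦ s(r)·σ ⊗ 1`, `σ = 1`)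
    (∀ r : R, act (emb r) 1 = r) := by
  have hq0 : q ≠ 0 := by rw [hq]; exact Complex.exp_ne_zero _
  have key1 : ∀ n : ℤ, (↑(U ^ n) : A) * ↑V = q ^ n • ((↑V : A) * ↑(U ^ n)) := qcomm hq0 hUV
  have key2 : ∀ n m : ℤ,
      (↑(U ^ n) : A) * ↑(V ^ m) = q ^ (n * m) • ((↑(V ^ m) : A) * ↑(U ^ n)) := by
    intro n m
    have hrel : (↑V : A) * ↑(U ^ n) = q ^ (-n) • ((↑(U ^ n) : A) * ↑V) := by
      have h1 := smul_flip' (zpow_ne_zero n hq0) (key1 n)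
      rw [← zpow_neg] at h1
      exact h1
    have h2 := qcomm (zpow_ne_zero (-n) hq0) hrel m
    have hne : ((q ^ (-n)) ^ m) ≠ 0 := zpow_ne_zero m (zpow_ne_zero (-n) hq0)
    have hc : ((q ^ (-n)) ^ m)⁻¹ = q ^ (n * m) := by
      rw [← zpow_mul, ← zpow_neg]
      congr 1
      ring
    rw [← hc]
    exact smul_flip' hne h2
  -- product of monomials
  have hprod : ∀ n m n' m' : ℤ,
      ((↑(U ^ n) : A) * ↑(V ^ m)) * ((↑(U ^ n') : A) * ↑(V ^ m')) =
        q ^ (-(n' * m)) • ((↑(U ^ (n + n')) : A) * ↑(V ^ (m + m'))) := by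
    intro n m n' m'
    have hVmUn : (↑(V ^ m) : A) * ↑(U ^ n') =
        q ^ (-(n' * m)) • ((↑(U ^ n') : A) * ↑(V ^ m)) := by
      have h1 := smul_flip' (zpow_ne_zero (n' * m) hq0) (key2 n' m)
      rw [← zpow_neg] at h1
      exact h1
    calc ((↑(U ^ n) : A) * ↑(V ^ m)) * ((↑(U ^ n') : A) * ↑(V ^ m'))
        = ↑(U ^ n) * ((↑(V ^ m) : A) * ↑(U ^ n')) * ↑(V ^ m') := by
          rw [mul_assoc, mul_assoc, mul_assoc]
      _ = q ^ (-(n' * m)) • (↑(U ^ n) * ((↑(U ^ n') : A) * ↑(V ^ m)) * ↑(V ^ m')) := by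
          rw [hVmUn, mul_smul_comm, smul_mul_assoc]
      _ = q ^ (-(n' * m)) • ((↑(U ^ (n + n')) : A) * ↑(V ^ (m + m'))) := by
          rw [← mul_assoc, ← Units.val_mul, ← zpow_add, mul_assoc, ← Units.val_mul, ← zpow_add]
  -- the core computation on monomials
  have hcore : ∀ n m n' m' k : ℤ,
      act ((↑(U ^ n) * ↑(V ^ m)) * (↑(U ^ n') * ↑(V ^ m'))) (↑(u ^ k)) =
        act (↑(U ^ n') * ↑(V ^ m')) (act (↑(U ^ n) * ↑(V ^ m)) (↑(u ^ k))) := by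
    intro n m n' m' k
    rw [hprod, map_smul, LinearMap.smul_apply, hact, hact, map_smul, hact, smul_smul, smul_smul,
      ← zpow_add₀ hq0, ← zpow_add₀ hq0]
    have he : -(n' * m) + (k + (n + n')) * (m + m') = (k + n) * m + (k + n + n') * m' := by ring
    have hk : k + (n + n') = k + n + n' := by ring
    rw [he, hk]
  -- extend over r, then y, then x
  have step1 : ∀ x ∈ {x : A | ∃ n m : ℤ, x = ↑(U ^ n) * ↑(V ^ m)},
      ∀ y ∈ {x : A | ∃ n m : ℤ, x = ↑(U ^ n) * ↑(V ^ m)},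
      act (x * y) = (act y) ∘ₗ (act x) := by
    rintro x ⟨n, m, rfl⟩ y ⟨n', m', rfl⟩
    apply LinearMap.ext_on hspanR
    rintro r ⟨k, rfl⟩
    simpa using hcore n m n' m' k
  have step2 : ∀ x ∈ {x : A | ∃ n m : ℤ, x = ↑(U ^ n) * ↑(V ^ m)},
      ∀ y : A, act (x * y) = (act y) ∘ₗ (act x) := by
    intro x hx y
    have hy : y ∈ Submodule.span ℂ {x : A | ∃ n m : ℤ, x = ↑(U ^ n) * ↑(V ^ m)} := by
      rw [hspanA]; trivial
    induction hy using Submodule.span_induction with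
    | mem z hz => exact step1 x hx z hz
    | zero => simp
    | add z w _ _ hz hw =>
      rw [mul_add, map_add, map_add, hz, hw, LinearMap.add_comp]
    | smul c z _ hz =>
      rw [mul_smul_comm, map_smul, map_smul, hz, LinearMap.smul_comp]
  have step3 : ∀ (x y : A), act (x * y) = (act y) ∘ₗ (act x) := by
    intro x y
    have hx : x ∈ Submodule.span ℂ {x : A | ∃ n m : ℤ, x = ↑(U ^ n) * ↑(V ^ m)} := by
      rw [hspanA]; trivial
    induction hx using Submodule.span_induction with
    | mem z hz => exact step2 z hz y
    | zero => simp
    | add z w _ _ hz hw =>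
      rw [add_mul, map_add, map_add, hz, hw, LinearMap.comp_add]
    | smul c z _ hz =>
      rw [smul_mul_assoc, map_smul, map_smul, hz, LinearMap.comp_smul]
  refine ⟨fun x y r => by rw [step3 x y]; rfl, ?_, ?_⟩
  · -- act 1 = id
    have h1 : act (1 : A) = LinearMap.id := by
      apply LinearMap.ext_on hspanR
      rintro r ⟨k, rfl⟩
      have h0 := hact 0 0 k
      simpa using h0
    intro r; rw [h1]; rfl
  · -- stability
    have hUnit : ∀ k : ℤ, emb ↑(u ^ k) = ↑(U ^ k) := by
      intro k
      have h2 : (Units.map (emb : R →* A)) u = U := by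
        ext
        simpa using hu
      have h3 : (Units.map (emb : R →* A)) (u ^ k) = U ^ k := by rw [map_zpow, h2]
      calc emb ↑(u ^ k) = ↑((Units.map (emb : R →* A)) (u ^ k)) := rfl
        _ = ↑(U ^ k) := by rw [h3]
    have hstab : (act.flip 1) ∘ₗ emb.toLinearMap = LinearMap.id := by
      apply LinearMap.ext_on hspanR
      rintro r ⟨k, rfl⟩
      simp only [LinearMap.comp_apply, AlgHom.toLinearMap_apply, LinearMap.flip_apply,
        LinearMap.id_apply]
      rw [hUnit k]
      simpa using hact k 0 0
    intro r
    have hr := congrArg (fun f => f r) hstab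
    simpa using hr
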